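/- arXiv:2508.00687 — 6 statements merged into one kernel-verified Lean document; each statement's English description precedes it below -/
import Mathlib

section
/- Let G = Z_{3,0}^8 ⋊ S_8 with S_8 acting by coordinate permutation, and let φ: G → S_8 be the canonical projection. If N is a normal subgroup of G with φ(N) = S_8, then N = G. -/
/-- The coordinate-sum homomorphism `(Z/kZ)^m → Z/kZ`. -/
def sumHom (k m : ℕ) : (Fin m → ZMod k) →+ ZMod k where
  toFun v := ∑ i, v i
  map_zero' := by simp
  map_add' x y := by simp [Finset.sum_add_distrib]

/-- `Z_{k,0}^m`, the subgroup of `(Z/kZ)^m` of tuples summing to zero. -/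
def sumKer (k m : ℕ) : AddSubgroup (Fin m → ZMod k) := (sumHom k m).ker

/-- The coordinate-permutation automorphism of `Z_{k,0}^m` induced by `σ`. -/
def permAutKer (k m : ℕ) (σ : Equiv.Perm (Fin m)) : ↥(sumKer k m) ≃+ ↥(sumKer k m) where
  toFun v := ⟨fun i => v.1 (σ.symm i), by
    have h := v.2
    simp only [sumKer, AddMonoidHom.mem_ker, sumHom, AddMonoidHom.coe_mk, ZeroHom.coe_mk] at h ⊢
    rw [Equiv.sum_comp σ.symm]
    exact h⟩
  invFun v := ⟨fun i => v.1 (σ i), by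
    have h := v.2
    simp only [sumKer, AddMonoidHom.mem_ker, sumHom, AddMonoidHom.coe_mk, ZeroHom.coe_mk] at h ⊢
    rw [Equiv.sum_comp σ]
    exact h⟩
  left_inv v := by ext i; simp
  right_inv v := by ext i; simp
  map_add' v w := rfl

/-- The multiplicative group structure on `AddAut A` that the older Mathlib provided. -/
instance AddAut.group (A : Type*) [Add A] : Group (AddAut A) where
  mul g h := AddEquiv.trans h g
  one := AddEquiv.refl _
  inv := AddEquiv.symm
  mul_assoc _ _ _ := rfl
  one_mul _ := rfl
  mul_one _ := rfl
  inv_mul_cancel := AddEquiv.self_trans_symm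

/-- The coordinate-permutation action of `S_m` on `Z_{k,0}^m`, as additive automorphisms. -/
def permHomKer (k m : ℕ) : Equiv.Perm (Fin m) →* AddAut ↥(sumKer k m) where
  toFun := permAutKer k m
  map_one' := rfl
  map_mul' σ τ := rfl

/-- The same action, on the multiplicative version of `Z_{k,0}^m`. -/
def permActM (k m : ℕ) : Equiv.Perm (Fin m) →* MulAut (Multiplicative ↥(sumKer k m)) where
  toFun σ := AddEquiv.toMultiplicative (permAutKer k m σ)
  map_one' := rfl
  map_mul' σ τ := rfl

/-- `G₂ = Z_{3,0}^8 ⋊ S_8`, with `S_8` acting by coordinate permutation. -/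
abbrev G2 := Multiplicative ↥(sumKer 3 8) ⋊[permActM 3 8] Equiv.Perm (Fin 8)

open SemidirectProduct

/-- basis vectors of the kernel -/
def dvec (i : Fin 8) : ↥(sumKer 3 8) :=
  ⟨Pi.single i 1 - Pi.single 0 1, by
    simp [sumKer, AddMonoidHom.mem_ker, sumHom, Finset.sum_sub_distrib]⟩


/-- if `N` is a normal subgroup of `G₂ = Z_{3,0}^8 ⋊ S_8` whose image under the
projection `φ : G₂ → S_8` is all of `S_8`, then `N = G₂`. -/
theorem stmt5 (N : Subgroup G2) (hN : N.Normal)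
    (h : N.map (SemidirectProduct.rightHom) = ⊤) : N = ⊤ := by
  classical
  -- for each σ, there is an element of N projecting to σ
  have hsurj : ∀ σ : Equiv.Perm (Fin 8), ∃ g ∈ N, g.right = σ := by
    intro σ
    have : σ ∈ N.map (SemidirectProduct.rightHom) := h ▸ Subgroup.mem_top σ
    obtain ⟨g, hg, hg'⟩ := this
    exact ⟨g, hg, hg'⟩
  -- commutator computation: w - σ·w ∈ N for all w, σ
  have key : ∀ (σ : Equiv.Perm (Fin 8)) (w : ↥(sumKer 3 8)),
      inl (Multiplicative.ofAdd (w - permAutKer 3 8 σ w)) ∈ N := by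
    intro σ w
    obtain ⟨g, hg, hgr⟩ := hsurj σ
    have hmem : (inl (Multiplicative.ofAdd w) * g * (inl (Multiplicative.ofAdd w))⁻¹) * g⁻¹ ∈ N :=
      N.mul_mem (hN.conj_mem g hg _) (N.inv_mem hg)
    have heq : (inl (Multiplicative.ofAdd w) * g * (inl (Multiplicative.ofAdd w))⁻¹) * g⁻¹ =
        inl (Multiplicative.ofAdd (w - permAutKer 3 8 σ w)) := by
      apply SemidirectProduct.ext
      · simp only [mul_left, mul_right, inv_left, inv_right, left_inl, right_inl, map_one,
          MulAut.one_apply, map_mul, map_inv]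
        subst hgr
        simp only [one_mul, inv_one, mul_one, MulAut.one_apply, MulAut.apply_inv_self]
        -- abelian group computation
        show Multiplicative.ofAdd w * g.left *
            (Multiplicative.ofAdd ((permAutKer 3 8 g.right) w))⁻¹ * g.left⁻¹ = _
        rw [ofAdd_sub, div_eq_mul_inv]
        simp [mul_comm, mul_left_comm, mul_assoc]
      · simp [mul_right, inv_right, div_eq_mul_inv]
    rw [heq] at hmem
    exact hmem
  -- the additive subgroup of vectors v with inl v ∈ N
  set A' : AddSubgroup ↥(sumKer 3 8) :=
    Subgroup.toAddSubgroup' (N.comap SemidirectProduct.inl) with hA'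
  have hmemA' : ∀ v : ↥(sumKer 3 8),
      v ∈ A' ↔ inl (Multiplicative.ofAdd v) ∈ N := fun v => Iff.rfl
  -- the generators dvec i are in A'
  have h4 : ∀ a : ZMod 3, a + a + (a + a) = a := by decide
  have hd : ∀ i : Fin 8, dvec i ∈ A' := by
    intro i
    have hk := key (Equiv.swap 0 i) (dvec i)
    have he : dvec i - permAutKer 3 8 (Equiv.swap 0 i) (dvec i) = dvec i + dvec i := by
      apply Subtype.ext
      funext j
      show (dvec i).1 j - (dvec i).1 ((Equiv.swap 0 i).symm j) = (dvec i).1 j + (dvec i).1 j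
      rw [Equiv.symm_swap]
      rcases eq_or_ne j 0 with rfl | hj0
      · rcases eq_or_ne i 0 with rfl | hi0
        · simp [dvec]
        · simp [dvec, Equiv.swap_apply_left, Pi.single_apply, hi0, Ne.symm hi0]
          decide
      · rcases eq_or_ne j i with rfl | hji
        · simp [dvec, Equiv.swap_apply_right, Pi.single_apply, hj0, Ne.symm hj0]
        · simp [dvec, Equiv.swap_apply_of_ne_of_ne hj0 hji, Pi.single_apply, hj0, hji]
    rw [he] at hk
    have hsum : dvec i + dvec i ∈ A' := (hmemA' _).2 hk
    have heq2 : (dvec i + dvec i) + (dvec i + dvec i) = dvec i := by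
      apply Subtype.ext
      simp only [AddSubgroup.coe_add]
      funext j
      exact h4 _
    exact heq2 ▸ A'.add_mem hsum hsum
  -- every element of the kernel is in A'
  have hall : ∀ v : ↥(sumKer 3 8), v ∈ A' := by
    intro v
    have hs : ∑ i, v.1 i = 0 := v.2
    have hv : v = ∑ i : Fin 8, (v.1 i).val • dvec i := by
      apply Subtype.ext
      rw [AddSubmonoidClass.coe_finset_sum]
      funext j
      simp only [Finset.sum_apply]
      have : ∀ i : Fin 8, ((v.1 i).val • dvec i : ↥(sumKer 3 8)).1 j
          = v.1 i * ((Pi.single i 1 : Fin 8 → ZMod 3) j - (Pi.single 0 1 : Fin 8 → ZMod 3) j) := by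
        intro i
        show (v.1 i).val • (dvec i).1 j = _
        simp [dvec, nsmul_eq_mul, ZMod.natCast_val, ZMod.cast_id]
      rw [Finset.sum_congr rfl fun i _ => this i]
      simp only [mul_sub, Finset.sum_sub_distrib, Pi.single_apply]
      rcases eq_or_ne j 0 with rfl | hj0
      · simp [← Finset.sum_mul, hs]
      · simp [hj0, Finset.sum_ite_eq', mul_comm]
    rw [hv]
    exact AddSubgroup.sum_mem _ fun i _ => AddSubgroup.nsmul_mem _ (hd i) _
  -- conclude
  rw [eq_top_iff]
  intro g _
  obtain ⟨n, hn, hnr⟩ := hsurj g.right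
  have h1 : (g * n⁻¹).right = 1 := by simp [mul_right, inv_right, hnr]
  have h2 : g * n⁻¹ = inl ((g * n⁻¹).left) := by
    apply SemidirectProduct.ext
    · simp
    · simpa using h1
  have h3 : g * n⁻¹ ∈ N := by
    rw [h2]
    exact (hmemA' ((g * n⁻¹).left)).1 (hall _)
  have : g = (g * n⁻¹) * n := by group
  rw [this]
  exact N.mul_mem h3 hn
end

section
/- Let P = {(σ, τ) ∈ S_{12} × S_8 : sign(σ) = sign(τ)}. Every normal subgroup of P is one of: the trivial group, 1 × A_8, A_{12} × 1, A_{12} × A_8, or P itself. -/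
open Equiv Equiv.Perm

variable {α : Type*} [Fintype α] [DecidableEq α]

lemma exists_notMem_of_card_lt {s : Finset α} (h : s.card < Fintype.card α) :
    ∃ x, x ∉ s := by
  by_contra hc
  push_neg at hc
  have : Finset.univ ⊆ s := fun x _ => hc x
  have := Finset.card_le_card this
  simp [Finset.card_univ] at this
  omega

lemma card_three_le (a b c : α) : ({a, b, c} : Finset α).card ≤ 3 :=
  calc ({a, b, c} : Finset α).card ≤ ({b, c} : Finset α).card + 1 := Finset.card_insert_le _ _
    _ ≤ (({c} : Finset α).card + 1) + 1 := by
        exact Nat.add_le_add_right (Finset.card_insert_le _ _) 1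
    _ ≤ 3 := by simp

lemma card_four_le (a b c d : α) : ({a, b, c, d} : Finset α).card ≤ 4 :=
  calc ({a, b, c, d} : Finset α).card ≤ ({b, c, d} : Finset α).card + 1 :=
      Finset.card_insert_le _ _
    _ ≤ 4 := by exact Nat.add_le_add_right (card_three_le b c d) 1

set_option linter.unusedSectionVars false

/-- A nontrivial subgroup of `Perm α` (`5 ≤ |α|`) normal in the full symmetric group
contains a 3-cycle. -/
lemma exists_threeCycle_mem {K : Subgroup (Perm α)} (hK : K.Normal)
    (h5 : 5 ≤ Fintype.card α) {τ : Perm α} (hτK : τ ∈ K) (hτ : τ ≠ 1) :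
    ∃ f : Perm α, f.IsThreeCycle ∧ f ∈ K := by
  -- find a moved point
  obtain ⟨a, ha⟩ : ∃ a, τ a ≠ a := by
    by_contra hc
    push_neg at hc
    exact hτ (Equiv.ext fun x => hc x)
  obtain ⟨b, hb⟩ : ∃ b, τ a = b := ⟨_, rfl⟩
  have hba : b ≠ a := hb ▸ ha
  obtain ⟨c, hc⟩ : ∃ c, c ∉ ({a, b, τ⁻¹ a} : Finset α) :=
    exists_notMem_of_card_lt (lt_of_le_of_lt (card_three_le _ _ _) (by omega))
  simp only [Finset.mem_insert, Finset.mem_singleton, not_or] at hc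
  obtain ⟨hca, hcb, hcia⟩ := hc
  have hca : c ≠ a := hca
  have hcb : c ≠ b := hcb
  have hcia : c ≠ τ⁻¹ a := hcia
  obtain ⟨d, hd⟩ : ∃ d, τ c = d := ⟨_, rfl⟩
  have hdb : d ≠ b := fun h => hca (τ.injective (by rw [hb, hd, h]))
  have hda : d ≠ a := fun h => hcia (by rw [← h, ← hd, Equiv.Perm.inv_def, Equiv.symm_apply_apply])
  -- first commutator
  have hσK : Equiv.swap a c * Equiv.swap b d ∈ K := by
    have h1 : Equiv.swap a c * τ * (Equiv.swap a c)⁻¹ ∈ K := hK.conj_mem τ hτK _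
    have h2 : (Equiv.swap a c * τ * (Equiv.swap a c)⁻¹) * τ⁻¹ ∈ K :=
      K.mul_mem h1 (K.inv_mem hτK)
    have heq : (Equiv.swap a c * τ * (Equiv.swap a c)⁻¹) * τ⁻¹
        = Equiv.swap a c * Equiv.swap b d := by
      have h3 : τ * Equiv.swap a c * τ⁻¹ = Equiv.swap b d := by
        rw [← hb, ← hd, ← swap_apply_apply]
      rw [← h3, Equiv.swap_inv]
      simp [mul_assoc]
    rwa [heq] at h2
  by_cases hdc : d = c
  · rw [hdc] at hσK
    refine ⟨Equiv.swap a c * Equiv.swap b c, ?_, hσK⟩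
    rw [Equiv.swap_comm a c, Equiv.swap_comm b c]
    exact isThreeCycle_swap_mul_swap_same hca hcb (Ne.symm hba)
  · -- second commutator
    obtain ⟨e, he⟩ : ∃ e, e ∉ ({a, b, c, d} : Finset α) :=
      exists_notMem_of_card_lt (lt_of_le_of_lt (card_four_le _ _ _ _) (by omega))
    simp only [Finset.mem_insert, Finset.mem_singleton, not_or] at he
    obtain ⟨hea, heb, hec, hed⟩ := he
    have hea : e ≠ a := hea
    have heb : e ≠ b := heb
    have hec : e ≠ c := hec
    have hed : e ≠ d := hed
    have h1 : Equiv.swap a e * (Equiv.swap a c * Equiv.swap b d) * (Equiv.swap a e)⁻¹ ∈ K :=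
      hK.conj_mem _ hσK _
    have h2 : (Equiv.swap a e * (Equiv.swap a c * Equiv.swap b d) * (Equiv.swap a e)⁻¹) *
        (Equiv.swap a c * Equiv.swap b d)⁻¹ ∈ K :=
      K.mul_mem h1 (K.inv_mem hσK)
    have key : (Equiv.swap a e * (Equiv.swap a c * Equiv.swap b d) * (Equiv.swap a e)⁻¹) *
        (Equiv.swap a c * Equiv.swap b d)⁻¹
        = Equiv.swap e c * Equiv.swap a c := by
      have hc1 : Equiv.swap a e * Equiv.swap a c * (Equiv.swap a e)⁻¹
          = Equiv.swap e c := by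
        rw [← swap_apply_apply, Equiv.swap_apply_left,
          Equiv.swap_apply_of_ne_of_ne hca hec.symm]
      have hc2 : Equiv.swap a e * Equiv.swap b d * (Equiv.swap a e)⁻¹
          = Equiv.swap b d := by
        rw [← swap_apply_apply, Equiv.swap_apply_of_ne_of_ne hba heb.symm,
          Equiv.swap_apply_of_ne_of_ne hda hed.symm]
      have expand : Equiv.swap a e * (Equiv.swap a c * Equiv.swap b d) * (Equiv.swap a e)⁻¹
          = (Equiv.swap a e * Equiv.swap a c * (Equiv.swap a e)⁻¹) *
            (Equiv.swap a e * Equiv.swap b d * (Equiv.swap a e)⁻¹) := by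
        group
      rw [expand, hc1, hc2, mul_inv_rev, Equiv.swap_inv, Equiv.swap_inv]
      simp [mul_assoc]
    rw [key] at h2
    refine ⟨Equiv.swap e c * Equiv.swap a c, ?_, h2⟩
    rw [Equiv.swap_comm e c, Equiv.swap_comm a c]
    exact isThreeCycle_swap_mul_swap_same hec.symm hca hea

/-- A nontrivial subgroup of `Perm α` (`5 ≤ |α|`) normal in the full symmetric group
contains the alternating group. -/
lemma alternating_le_of_normal {K : Subgroup (Perm α)} (hK : K.Normal)
    (h5 : 5 ≤ Fintype.card α) {τ : Perm α} (hτK : τ ∈ K) (hτ : τ ≠ 1) :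
    alternatingGroup α ≤ K := by
  obtain ⟨f, hf, hfK⟩ := exists_threeCycle_mem hK h5 hτK hτ
  have hKA : (K.subgroupOf (alternatingGroup α)).Normal := hK.subgroupOf _
  have hmem : (⟨f, hf.mem_alternatingGroup⟩ : alternatingGroup α) ∈
      K.subgroupOf (alternatingGroup α) := by
    rw [Subgroup.mem_subgroupOf]; exact hfK
  have htop : K.subgroupOf (alternatingGroup α) = ⊤ := by
    rw [eq_top_iff, ← hf.alternating_normalClosure (by rwa [Nat.card_eq_fintype_card])]
    exact Subgroup.normalClosure_le_normal (Set.singleton_subset_iff.2 hmem)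
  intro g hg
  have : (⟨g, hg⟩ : alternatingGroup α) ∈ K.subgroupOf (alternatingGroup α) := by
    rw [htop]; trivial
  rwa [Subgroup.mem_subgroupOf] at this

/-- Any non-identity permutation (on `4 ≤ |α|` points) fails to commute with some
even permutation; stated as a nontrivial commutator. -/
lemma exists_even_commutator_ne_one (h4 : 4 ≤ Fintype.card α) {σ : Perm α} (hσ : σ ≠ 1) :
    ∃ ρ : Perm α, Equiv.Perm.sign ρ = 1 ∧ ρ * σ * ρ⁻¹ * σ⁻¹ ≠ 1 := by
  obtain ⟨a, ha⟩ : ∃ a, σ a ≠ a := by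
    by_contra hc
    push_neg at hc
    exact hσ (Equiv.ext fun x => hc x)
  obtain ⟨b, hb⟩ : ∃ b, b ∉ ({a, σ a} : Finset α) := by
    apply exists_notMem_of_card_lt
    exact lt_of_le_of_lt (Finset.card_insert_le _ _) (by simp; omega)
  obtain ⟨c, hc⟩ : ∃ c, c ∉ ({a, σ a, b} : Finset α) :=
    exists_notMem_of_card_lt (lt_of_le_of_lt (card_three_le _ _ _) (by omega))
  simp only [Finset.mem_insert, Finset.mem_singleton, not_or] at hb hc
  obtain ⟨hba, hbs⟩ := hb
  obtain ⟨hca, hcs, hcb⟩ := hc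
  refine ⟨Equiv.swap a b * Equiv.swap a c, ?_, ?_⟩
  · rw [map_mul, Equiv.Perm.sign_swap (Ne.symm hba), Equiv.Perm.sign_swap (Ne.symm hca)]
    simp
  · intro h
    rw [mul_inv_eq_one, mul_inv_eq_iff_eq_mul] at h
    have := congrArg (fun f : Perm α => f a) h
    simp only [Equiv.Perm.coe_mul, Function.comp_apply] at this
    rw [Equiv.swap_apply_of_ne_of_ne ha (fun hh => hcs hh.symm),
      Equiv.swap_apply_of_ne_of_ne ha (fun hh => hbs hh.symm),
      Equiv.swap_apply_left, Equiv.swap_apply_of_ne_of_ne hca hcb] at this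
    exact hca (σ.injective this.symm)

/-- `P`, the subgroup of `S_12 × S_8` of pairs of permutations with equal signs. -/
def P : Subgroup (Equiv.Perm (Fin 12) × Equiv.Perm (Fin 8)) where
  carrier := {p | Equiv.Perm.sign p.1 = Equiv.Perm.sign p.2}
  one_mem' := by simp
  mul_mem' := by
    intro x y hx hy
    simp only [Set.mem_setOf_eq, Prod.fst_mul, Prod.snd_mul, map_mul] at *
    rw [hx, hy]
  inv_mem' := by
    intro x hx
    simp only [Set.mem_setOf_eq, Prod.fst_inv, Prod.snd_inv, map_inv] at *
    rw [hx]

lemma mem_P_iff {p : Equiv.Perm (Fin 12) × Equiv.Perm (Fin 8)} :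
    p ∈ P ↔ Equiv.Perm.sign p.1 = Equiv.Perm.sign p.2 := Iff.rfl

/-- `±1` mapped to `1` / `swap x y`. -/
def signedSwap {β : Type*} [DecidableEq β] (x y : β) : ℤˣ →* Equiv.Perm β where
  toFun u := if u = 1 then 1 else Equiv.swap x y
  map_one' := if_pos rfl
  map_mul' u v := by
    rcases Int.units_eq_one_or u with h | h <;> rcases Int.units_eq_one_or v with h' | h' <;>
      subst h <;> subst h' <;> simp [Equiv.swap_mul_self]

lemma sign_signedSwap {β : Type*} [DecidableEq β] [Fintype β] {x y : β} (hxy : x ≠ y)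
    (u : ℤˣ) : Equiv.Perm.sign (signedSwap x y u) = u := by
  rcases Int.units_eq_one_or u with h | h <;> subst h <;>
    simp [signedSwap, Equiv.Perm.sign_swap hxy]

/-- embedding of `S_12` into `P`, adjusting the sign with a swap on the `S_8` side. -/
def ψ1 : Equiv.Perm (Fin 12) →* ↥P :=
  MonoidHom.codRestrict
    ((MonoidHom.id _).prod ((signedSwap (0 : Fin 8) 1).comp Equiv.Perm.sign)) P
    (fun σ => by
      rw [mem_P_iff]
      exact (sign_signedSwap (by decide) _).symm)

/-- embedding of `S_8` into `P`, adjusting the sign with a swap on the `S_12` side. -/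
def ψ2 : Equiv.Perm (Fin 8) →* ↥P :=
  MonoidHom.codRestrict
    (((signedSwap (0 : Fin 12) 1).comp Equiv.Perm.sign).prod (MonoidHom.id _)) P
    (fun τ => by
      rw [mem_P_iff]
      exact sign_signedSwap (by decide) _)

@[simp] lemma ψ1_val (σ : Equiv.Perm (Fin 12)) :
    (ψ1 σ : Equiv.Perm (Fin 12) × Equiv.Perm (Fin 8)) =
      (σ, signedSwap (0 : Fin 8) 1 (Equiv.Perm.sign σ)) := rfl

@[simp] lemma ψ2_val (τ : Equiv.Perm (Fin 8)) :
    (ψ2 τ : Equiv.Perm (Fin 12) × Equiv.Perm (Fin 8)) =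
      (signedSwap (0 : Fin 12) 1 (Equiv.Perm.sign τ), τ) := rfl

lemma ψ1_of_even {σ : Equiv.Perm (Fin 12)} (h : Equiv.Perm.sign σ = 1) :
    (ψ1 σ : Equiv.Perm (Fin 12) × Equiv.Perm (Fin 8)) = (σ, 1) := by
  simp [h, signedSwap]

lemma ψ2_of_even {τ : Equiv.Perm (Fin 8)} (h : Equiv.Perm.sign τ = 1) :
    (ψ2 τ : Equiv.Perm (Fin 12) × Equiv.Perm (Fin 8)) = (1, τ) := by
  simp [h, signedSwap]

lemma alt_le_one {N : Subgroup ↥P} (hN : N.Normal)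
    {g : ↥P} (hg : g ∈ N) (h : (g : Equiv.Perm (Fin 12) × Equiv.Perm (Fin 8)).1 ≠ 1) :
    ∀ σ ∈ alternatingGroup (Fin 12), ψ1 σ ∈ N := by
  obtain ⟨ρ, hρ, hcomm⟩ := exists_even_commutator_ne_one (by simp) h
  set σ₀ := (g : Equiv.Perm (Fin 12) × Equiv.Perm (Fin 8)).1 with hσ₀
  set x := ρ * σ₀ * ρ⁻¹ * σ₀⁻¹ with hx
  have hxsign : Equiv.Perm.sign x = 1 := by
    simp [hx, map_mul, hρ, mul_comm]
  have hmemN : ψ1 ρ * g * (ψ1 ρ)⁻¹ * g⁻¹ ∈ N :=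
    N.mul_mem (hN.conj_mem g hg (ψ1 ρ)) (N.inv_mem hg)
  have hval : ((ψ1 ρ * g * (ψ1 ρ)⁻¹ * g⁻¹ : ↥P) :
      Equiv.Perm (Fin 12) × Equiv.Perm (Fin 8)) = (x, 1) := by
    have h2 := ψ1_of_even hρ
    rw [Prod.ext_iff]
    constructor
    · simp [h2, hx, hσ₀]
    · simp [h2]
  have hψx : ψ1 x = ψ1 ρ * g * (ψ1 ρ)⁻¹ * g⁻¹ := by
    apply Subtype.ext
    rw [hval, ψ1_of_even hxsign]
  have hxN : ψ1 x ∈ N := hψx ▸ hmemN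
  intro σ hσ
  have hKnormal : (N.comap ψ1).Normal := hN.comap ψ1
  exact alternating_le_of_normal hKnormal (by simp) (Subgroup.mem_comap.2 hxN) hcomm hσ

lemma alt_le_two {N : Subgroup ↥P} (hN : N.Normal)
    {g : ↥P} (hg : g ∈ N) (h : (g : Equiv.Perm (Fin 12) × Equiv.Perm (Fin 8)).2 ≠ 1) :
    ∀ τ ∈ alternatingGroup (Fin 8), ψ2 τ ∈ N := by
  obtain ⟨ρ, hρ, hcomm⟩ := exists_even_commutator_ne_one (by simp) h
  set τ₀ := (g : Equiv.Perm (Fin 12) × Equiv.Perm (Fin 8)).2 with hτ₀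
  set x := ρ * τ₀ * ρ⁻¹ * τ₀⁻¹ with hx
  have hxsign : Equiv.Perm.sign x = 1 := by
    simp [hx, map_mul, hρ, mul_comm]
  have hmemN : ψ2 ρ * g * (ψ2 ρ)⁻¹ * g⁻¹ ∈ N :=
    N.mul_mem (hN.conj_mem g hg (ψ2 ρ)) (N.inv_mem hg)
  have hval : ((ψ2 ρ * g * (ψ2 ρ)⁻¹ * g⁻¹ : ↥P) :
      Equiv.Perm (Fin 12) × Equiv.Perm (Fin 8)) = (1, x) := by
    have h2 := ψ2_of_even hρ
    rw [Prod.ext_iff]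
    constructor
    · simp [h2]
    · simp [h2, hx, hτ₀]
  have hψx : ψ2 x = ψ2 ρ * g * (ψ2 ρ)⁻¹ * g⁻¹ := by
    apply Subtype.ext
    rw [hval, ψ2_of_even hxsign]
  have hxN : ψ2 x ∈ N := hψx ▸ hmemN
  intro τ hτ
  have hKnormal : (N.comap ψ2).Normal := hN.comap ψ2
  exact alternating_le_of_normal hKnormal (by simp) (Subgroup.mem_comap.2 hxN) hcomm hτ

lemma sign_snd (g : ↥P) :
    Equiv.Perm.sign (g : Equiv.Perm (Fin 12) × Equiv.Perm (Fin 8)).2 =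
    Equiv.Perm.sign (g : Equiv.Perm (Fin 12) × Equiv.Perm (Fin 8)).1 :=
  (mem_P_iff.1 g.2).symm

/-- every normal subgroup of `P` is one of `1`, `1 × A_8`, `A_12 × 1`,
`A_12 × A_8`, or `P` itself. -/
theorem stmt9 (N : Subgroup ↥P) (hN : N.Normal) :
    N = ⊥ ∨
    N = Subgroup.comap P.subtype
          ((⊥ : Subgroup (Equiv.Perm (Fin 12))).prod (alternatingGroup (Fin 8))) ∨
    N = Subgroup.comap P.subtype
          ((alternatingGroup (Fin 12)).prod (⊥ : Subgroup (Equiv.Perm (Fin 8)))) ∨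
    N = Subgroup.comap P.subtype
          ((alternatingGroup (Fin 12)).prod (alternatingGroup (Fin 8))) ∨
    N = ⊤ := by
  by_cases h1 : ∀ g ∈ N, (g : Equiv.Perm (Fin 12) × Equiv.Perm (Fin 8)).1 = 1
  · by_cases h2 : ∀ g ∈ N, (g : Equiv.Perm (Fin 12) × Equiv.Perm (Fin 8)).2 = 1
    · left
      rw [Subgroup.eq_bot_iff_forall]
      intro g hg
      apply Subtype.ext
      apply Prod.ext
      · simpa using h1 g hg
      · simpa using h2 g hg
    · right; left
      push_neg at h2
      obtain ⟨g₀, hg₀N, hg₀⟩ := h2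
      have halt := alt_le_two hN hg₀N hg₀
      ext g
      rw [Subgroup.mem_comap, Subgroup.mem_prod]
      constructor
      · intro hg
        constructor
        · simpa [Subgroup.mem_bot] using h1 g hg
        · rw [Equiv.Perm.mem_alternatingGroup]
          show Equiv.Perm.sign (g : Equiv.Perm (Fin 12) × Equiv.Perm (Fin 8)).2 = 1
          rw [sign_snd, h1 g hg, map_one]
      · rintro ⟨ha, hb⟩
        simp only [Subgroup.coe_subtype] at ha hb
        have ha' : (g : Equiv.Perm (Fin 12) × Equiv.Perm (Fin 8)).1 = 1 := by
          simpa [Subgroup.mem_bot] using ha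
        have hτ := halt _ hb
        have heq : ψ2 (g : Equiv.Perm (Fin 12) × Equiv.Perm (Fin 8)).2 = g := by
          apply Subtype.ext
          rw [ψ2_of_even (Equiv.Perm.mem_alternatingGroup.1 hb)]
          exact Prod.ext ha'.symm rfl
        rwa [heq] at hτ
  · by_cases h2 : ∀ g ∈ N, (g : Equiv.Perm (Fin 12) × Equiv.Perm (Fin 8)).2 = 1
    · right; right; left
      push_neg at h1
      obtain ⟨g₀, hg₀N, hg₀⟩ := h1
      have halt := alt_le_one hN hg₀N hg₀
      ext g
      rw [Subgroup.mem_comap, Subgroup.mem_prod]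
      constructor
      · intro hg
        constructor
        · rw [Equiv.Perm.mem_alternatingGroup]
          show Equiv.Perm.sign (g : Equiv.Perm (Fin 12) × Equiv.Perm (Fin 8)).1 = 1
          rw [← sign_snd, h2 g hg, map_one]
        · simpa [Subgroup.mem_bot] using h2 g hg
      · rintro ⟨ha, hb⟩
        simp only [Subgroup.coe_subtype] at ha hb
        have hb' : (g : Equiv.Perm (Fin 12) × Equiv.Perm (Fin 8)).2 = 1 := by
          simpa [Subgroup.mem_bot] using hb
        have hσ := halt _ ha
        have heq : ψ1 (g : Equiv.Perm (Fin 12) × Equiv.Perm (Fin 8)).1 = g := by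
          apply Subtype.ext
          rw [ψ1_of_even (Equiv.Perm.mem_alternatingGroup.1 ha)]
          exact Prod.ext rfl hb'.symm
        rwa [heq] at hσ
    · push_neg at h1 h2
      obtain ⟨x₁, hx₁N, hx₁⟩ := h1
      obtain ⟨x₂, hx₂N, hx₂⟩ := h2
      have halt1 := alt_le_one hN hx₁N hx₁
      have halt2 := alt_le_two hN hx₂N hx₂
      have hM : ∀ g : ↥P, (g : Equiv.Perm (Fin 12) × Equiv.Perm (Fin 8)).1 ∈
            alternatingGroup (Fin 12) →
          (g : Equiv.Perm (Fin 12) × Equiv.Perm (Fin 8)).2 ∈ alternatingGroup (Fin 8) →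
          g ∈ N := by
        intro g ha hb
        have e1 := halt1 _ ha
        have e2 := halt2 _ hb
        have heq : ψ1 (g : Equiv.Perm (Fin 12) × Equiv.Perm (Fin 8)).1 *
            ψ2 (g : Equiv.Perm (Fin 12) × Equiv.Perm (Fin 8)).2 = g := by
          apply Subtype.ext
          rw [Subgroup.coe_mul, ψ1_of_even (Equiv.Perm.mem_alternatingGroup.1 ha),
            ψ2_of_even (Equiv.Perm.mem_alternatingGroup.1 hb)]
          exact Prod.ext (mul_one _) (one_mul _)
        exact heq ▸ N.mul_mem e1 e2
      by_cases h3 : ∀ g ∈ N, (g : Equiv.Perm (Fin 12) × Equiv.Perm (Fin 8)).1 ∈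
          alternatingGroup (Fin 12)
      · right; right; right; left
        ext g
        rw [Subgroup.mem_comap, Subgroup.mem_prod]
        constructor
        · intro hg
          refine ⟨h3 g hg, ?_⟩
          rw [Equiv.Perm.mem_alternatingGroup]
          show Equiv.Perm.sign (g : Equiv.Perm (Fin 12) × Equiv.Perm (Fin 8)).2 = 1
          rw [sign_snd]
          exact Equiv.Perm.mem_alternatingGroup.1 (h3 g hg)
        · rintro ⟨ha, hb⟩
          simp only [Subgroup.coe_subtype] at ha hb
          exact hM g ha hb
      · right; right; right; right
        push_neg at h3
        obtain ⟨x, hxN, hx⟩ := h3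
        have hxs : Equiv.Perm.sign (x : Equiv.Perm (Fin 12) × Equiv.Perm (Fin 8)).1 = -1 := by
          rcases Int.units_eq_one_or
            (Equiv.Perm.sign (x : Equiv.Perm (Fin 12) × Equiv.Perm (Fin 8)).1) with h | h
          · exact absurd (Equiv.Perm.mem_alternatingGroup.2 h) hx
          · exact h
        rw [Subgroup.eq_top_iff']
        intro y
        have hPmem : ∀ z : ↥P, Equiv.Perm.sign
            (z : Equiv.Perm (Fin 12) × Equiv.Perm (Fin 8)).1 = 1 → z ∈ N := by
          intro z hz
          exact hM z (Equiv.Perm.mem_alternatingGroup.2 hz)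
            (Equiv.Perm.mem_alternatingGroup.2 (by rw [sign_snd, hz]))
        rcases Int.units_eq_one_or
          (Equiv.Perm.sign (y : Equiv.Perm (Fin 12) × Equiv.Perm (Fin 8)).1) with hy | hy
        · exact hPmem y hy
        · have hmem : x⁻¹ * y ∈ N := by
            apply hPmem
            show Equiv.Perm.sign ((x⁻¹ * y : ↥P) :
              Equiv.Perm (Fin 12) × Equiv.Perm (Fin 8)).1 = 1
            rw [Subgroup.coe_mul, Subgroup.coe_inv, Prod.fst_mul, Prod.fst_inv, map_mul,
              map_inv, hxs, hy]
            decide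
          have := N.mul_mem hxN hmem
          rwa [mul_inv_cancel_left] at this
end

section
/- Let P = {(σ, τ) ∈ S_{12} × S_8 : sign(σ) = sign(τ)}. Then P contains no nontrivial normal 2-subgroup. -/
open Equiv

lemma exists_notin {α : Type*} [Fintype α] [DecidableEq α] (s : Finset α)
    (h : s.card < Fintype.card α) : ∃ c, c ∉ s := by
  have : (sᶜ : Finset α).Nonempty := by
    rw [← Finset.card_pos, Finset.card_compl]; omega
  obtain ⟨c, hc⟩ := this
  exact ⟨c, Finset.mem_compl.mp hc⟩

lemma three_cycle_contradiction {α : Type*} (p : Equiv.Perm α) {x y z : α}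
    (hxy : y ≠ x) (hxz : z ≠ x) (e1 : p x = y) (e2 : p y = z) (e3 : p z = x)
    (k : ℕ) (hp : p ^ (2 ^ k) = 1) : False := by
  have key : ∀ m : ℕ, (p ^ m) x = if m % 3 = 0 then x else if m % 3 = 1 then y else z := by
    intro m
    induction m with
    | zero => simp
    | succ n ih =>
      rw [pow_succ', Equiv.Perm.mul_apply, ih]
      have h3n : n % 3 = 0 ∨ n % 3 = 1 ∨ n % 3 = 2 := by omega
      rcases h3n with hc | hc | hc
      · rw [if_pos hc, e1, if_neg (by omega), if_pos (by omega)]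
      · rw [if_neg (by omega), if_pos hc, e2, if_neg (by omega), if_neg (by omega)]
      · rw [if_neg (by omega), if_neg (by omega), e3, if_pos (by omega)]
  have hnd : ¬ (2 ^ k % 3 = 0) := by
    intro hdvd
    have : (3 : ℕ) ∣ 2 ^ k := Nat.dvd_of_mod_eq_zero hdvd
    have := Nat.Prime.dvd_of_dvd_pow (p := 3) (by norm_num) this
    omega
  have := key (2 ^ k)
  rw [hp] at this
  simp only [Equiv.Perm.one_apply] at this
  have hlt : 2 ^ k % 3 = 0 ∨ 2 ^ k % 3 = 1 ∨ 2 ^ k % 3 = 2 := by omega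
  rcases hlt with h | h | h
  · exact hnd h
  · rw [if_neg (by omega), if_pos h] at this; exact hxy this.symm
  · rw [if_neg (by omega), if_neg (by omega)] at this; exact hxz this.symm

lemma normal_two_subgroup_perm_eq_bot {α : Type*} [Fintype α] [DecidableEq α]
    (h5 : 5 ≤ Fintype.card α) (H : Subgroup (Equiv.Perm α)) (hH : H.Normal)
    (h2 : IsPGroup 2 H) : H = ⊥ := by
  rw [Subgroup.eq_bot_iff_forall]
  intro x hx
  by_contra hx1
  -- extract an involution h ∈ H
  obtain ⟨k, hk⟩ := h2 ⟨x, hx⟩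
  obtain ⟨m, -, hord⟩ := (Nat.dvd_prime_pow Nat.prime_two).mp (orderOf_dvd_of_pow_eq_one hk)
  have hm1 : 1 ≤ m := by
    rcases Nat.eq_zero_or_pos m with h0 | h
    · exfalso
      rw [h0, pow_zero] at hord
      exact hx1 (congrArg Subtype.val (orderOf_eq_one_iff.mp hord))
    · exact h
  set v : H := (⟨x, hx⟩ : H) ^ (2 ^ (m - 1)) with hv
  have hv2 : v * v = 1 := by
    rw [hv, ← pow_add]
    have he : 2 ^ (m - 1) + 2 ^ (m - 1) = 2 ^ m := by
      rw [← two_mul, ← pow_succ']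
      congr 1
      omega
    rw [he, ← hord, pow_orderOf_eq_one]
  have hvne : v ≠ 1 := by
    intro hone
    have hdvd : orderOf (⟨x, hx⟩ : H) ∣ 2 ^ (m - 1) := orderOf_dvd_of_pow_eq_one hone
    rw [hord] at hdvd
    have hle := Nat.le_of_dvd (Nat.pow_pos (by norm_num)) hdvd
    have hlt : 2 ^ (m - 1) < 2 ^ m :=
      Nat.pow_lt_pow_right (by norm_num) (by omega)
    omega
  obtain ⟨h, hh, hmul1, hne⟩ : ∃ h : Equiv.Perm α, h ∈ H ∧ h * h = 1 ∧ h ≠ 1 := by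
    refine ⟨(v : Equiv.Perm α), v.2, ?_, ?_⟩
    · have := congrArg Subtype.val hv2
      simpa using this
    · intro hh1
      exact hvne (Subtype.ext hh1)
  have hinv : ∀ w : α, h (h w) = w := by
    intro w
    have := congrArg (fun q : Equiv.Perm α => q w) hmul1
    simpa [Equiv.Perm.mul_apply] using this
  obtain ⟨a, ha⟩ : ∃ a, h a ≠ a := by
    by_contra hall
    push_neg at hall
    exact hne (Equiv.ext fun w => by simpa using hall w)
  -- the contradiction-deriving step, given a 3-cycle structure
  have contra : ∀ (p : Equiv.Perm α) (_ : p ∈ H) (x' y' z' : α), y' ≠ x' → z' ≠ x' →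
      p x' = y' → p y' = z' → p z' = x' → False := by
    intro p hp x' y' z' h1 h2' e1 e2 e3
    obtain ⟨k', hk'⟩ := h2 ⟨p, hp⟩
    have hp1 : p ^ (2 ^ k') = 1 := by
      have := congrArg Subtype.val hk'
      simpa using this
    exact three_cycle_contradiction p h1 h2' e1 e2 e3 k' hp1
  by_cases hfix : ∃ c, c ≠ a ∧ c ≠ h a ∧ h c = c
  · -- Case A: h has a fixed point c outside {a, h a}
    obtain ⟨c, hca, hcb, hcc⟩ := hfix
    have hpH : (h * (Equiv.swap (h a) c * h * (Equiv.swap (h a) c)⁻¹)) ∈ H :=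
      H.mul_mem hh (by simpa [mul_assoc] using hH.conj_mem _ hh (Equiv.swap (h a) c))
    refine contra _ hpH a c (h a) hca ha ?_ ?_ ?_
    · simp only [Equiv.Perm.mul_apply, Equiv.swap_inv]
      rw [Equiv.swap_apply_of_ne_of_ne (Ne.symm ha) (Ne.symm hca),
        Equiv.swap_apply_left, hcc]
    · simp only [Equiv.Perm.mul_apply, Equiv.swap_inv]
      rw [Equiv.swap_apply_right, hinv a,
        Equiv.swap_apply_of_ne_of_ne (Ne.symm ha) (Ne.symm hca)]
    · simp only [Equiv.Perm.mul_apply, Equiv.swap_inv]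
      rw [Equiv.swap_apply_left, hcc, Equiv.swap_apply_right, hinv a]
  · -- Case B: every point outside {a, h a} is moved by h
    push_neg at hfix
    obtain ⟨c, hc⟩ := exists_notin ({a, h a} : Finset α) (by
      have := Finset.card_insert_le a ({h a} : Finset α)
      simp only [Finset.card_singleton] at this
      omega)
    simp only [Finset.mem_insert, Finset.mem_singleton, not_or] at hc
    obtain ⟨hca, hcb⟩ := hc
    have hdcc : h c ≠ c := hfix c hca hcb
    have hdca : h c ≠ a := by
      intro heq
      apply hcb
      conv_lhs => rw [← hinv c]
      rw [heq]
    obtain ⟨e, he⟩ := exists_notin ({a, h a, c, h c} : Finset α) (by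
      have t1 := Finset.card_insert_le a ({h a, c, h c} : Finset α)
      have t2 := Finset.card_insert_le (h a) ({c, h c} : Finset α)
      have t3 := Finset.card_insert_le c ({h c} : Finset α)
      simp only [Finset.card_singleton] at t1 t2 t3
      omega)
    simp only [Finset.mem_insert, Finset.mem_singleton, not_or] at he
    obtain ⟨hea, heb, hec, hed⟩ := he
    have hfe : h e ≠ e := hfix e hea heb
    have hfa : h e ≠ a := by
      intro heq
      apply heb
      conv_lhs => rw [← hinv e]
      rw [heq]
    have hfc : h e ≠ c := by
      intro heq
      apply hed
      conv_lhs => rw [← hinv e]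
      rw [heq]
    set g : Equiv.Perm α := Equiv.swap c e * Equiv.swap a c with hg
    have hga : g a = e := by
      rw [hg]
      simp only [Equiv.Perm.mul_apply]
      rw [Equiv.swap_apply_left, Equiv.swap_apply_left]
    have hgc : g c = a := by
      rw [hg]
      simp only [Equiv.Perm.mul_apply]
      rw [Equiv.swap_apply_right, Equiv.swap_apply_of_ne_of_ne (Ne.symm hca) (Ne.symm hea)]
    have hge : g e = c := by
      rw [hg]
      simp only [Equiv.Perm.mul_apply]
      rw [Equiv.swap_apply_of_ne_of_ne hea hec, Equiv.swap_apply_right]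
    have hgb : g (h a) = h a := by
      rw [hg]
      simp only [Equiv.Perm.mul_apply]
      rw [Equiv.swap_apply_of_ne_of_ne ha (Ne.symm hcb),
        Equiv.swap_apply_of_ne_of_ne (Ne.symm hcb) (Ne.symm heb)]
    have hgd : g (h c) = h c := by
      rw [hg]
      simp only [Equiv.Perm.mul_apply]
      rw [Equiv.swap_apply_of_ne_of_ne hdca hdcc,
        Equiv.swap_apply_of_ne_of_ne hdcc (Ne.symm hed)]
    have hgf : g (h e) = h e := by
      rw [hg]
      simp only [Equiv.Perm.mul_apply]
      rw [Equiv.swap_apply_of_ne_of_ne hfa hfc,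
        Equiv.swap_apply_of_ne_of_ne hfc hfe]
    have hgia : g⁻¹ a = c := by rw [← hgc]; exact g.symm_apply_apply c
    have hgic : g⁻¹ c = e := by rw [← hge]; exact g.symm_apply_apply e
    have hgie : g⁻¹ e = a := by rw [← hga]; exact g.symm_apply_apply a
    have hpH : (h * (g * h * g⁻¹)) ∈ H :=
      H.mul_mem hh (by simpa [mul_assoc] using hH.conj_mem _ hh g)
    refine contra _ hpH a c e hca hea ?_ ?_ ?_
    · simp only [Equiv.Perm.mul_apply]
      rw [hgia, hgd, hinv c]
    · simp only [Equiv.Perm.mul_apply]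
      rw [hgic, hgf, hinv e]
    · simp only [Equiv.Perm.mul_apply]
      rw [hgie, hgb, hinv a]

/-- `P` contains no nontrivial normal 2-subgroup. -/
theorem stmt10 (N : Subgroup ↥P) (hN : N.Normal) (h2 : IsPGroup 2 N) : N = ⊥ := by
  set φ : ↥P →* Equiv.Perm (Fin 12) :=
    (MonoidHom.fst (Equiv.Perm (Fin 12)) (Equiv.Perm (Fin 8))).comp P.subtype with hφ
  set ψ : ↥P →* Equiv.Perm (Fin 8) :=
    (MonoidHom.snd (Equiv.Perm (Fin 12)) (Equiv.Perm (Fin 8))).comp P.subtype with hψ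
  have hφs : Function.Surjective φ := by
    intro σ
    by_cases hs : Equiv.Perm.sign σ = 1
    · exact ⟨⟨(σ, 1), by simp [P, hs]⟩, rfl⟩
    · have hs' : Equiv.Perm.sign σ = -1 := by
        rcases Int.units_eq_one_or (Equiv.Perm.sign σ) with h | h
        · exact absurd h hs
        · exact h
      refine ⟨⟨(σ, Equiv.swap 0 1), ?_⟩, rfl⟩
      show Equiv.Perm.sign σ = Equiv.Perm.sign (Equiv.swap (0 : Fin 8) 1)
      rw [hs', Equiv.Perm.sign_swap (by decide)]
  have hψs : Function.Surjective ψ := by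
    intro τ
    by_cases hs : Equiv.Perm.sign τ = 1
    · exact ⟨⟨(1, τ), by simp [P, hs]⟩, rfl⟩
    · have hs' : Equiv.Perm.sign τ = -1 := by
        rcases Int.units_eq_one_or (Equiv.Perm.sign τ) with h | h
        · exact absurd h hs
        · exact h
      refine ⟨⟨(Equiv.swap 0 1, τ), ?_⟩, rfl⟩
      show Equiv.Perm.sign (Equiv.swap (0 : Fin 12) 1) = Equiv.Perm.sign τ
      rw [hs', Equiv.Perm.sign_swap (by decide)]
  have hmap1 : N.map φ = ⊥ :=
    normal_two_subgroup_perm_eq_bot (by simp) (N.map φ) (hN.map φ hφs) (h2.map φ)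
  have hmap2 : N.map ψ = ⊥ :=
    normal_two_subgroup_perm_eq_bot (by simp) (N.map ψ) (hN.map ψ hψs) (h2.map ψ)
  rw [Subgroup.eq_bot_iff_forall]
  intro u hu
  have h1 : φ u = 1 := by
    have : φ u ∈ N.map φ := Subgroup.mem_map_of_mem φ hu
    rwa [hmap1, Subgroup.mem_bot] at this
  have h2' : ψ u = 1 := by
    have : ψ u ∈ N.map ψ := Subgroup.mem_map_of_mem ψ hu
    rwa [hmap2, Subgroup.mem_bot] at this
  apply Subtype.ext
  apply Prod.ext
  · exact h1
  · exact h2'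
end

section
/- Every finite abelian group A with invariant factor decomposition A ≅ Z_{d_1} ⊕ ... ⊕ Z_{d_s} (with d_1 | d_2 | ... | d_s) admits a faithful complex representation of dimension s, and every faithful complex representation of A has dimension at least s. Hence the minimal faithful complex dimension of A equals the number of invariant factors. -/
open Finset in
lemma aux_nilp_pow {R : Type*} [CommRing R] [Algebra ℂ R] {x : R} {μ : ℂ}
    (h : IsNilpotent (x - algebraMap ℂ R μ)) (k : ℕ) :
    IsNilpotent (x ^ k - algebraMap ℂ R (μ ^ k)) := by
  have := geom_sum₂_mul x (algebraMap ℂ R μ) k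
  rw [map_pow, ← this]
  exact (Commute.all _ _).isNilpotent_mul_left h

lemma aux_key_root {R : Type*} [CommRing R] [Algebra ℂ R]
    (hinj : Function.Injective (algebraMap ℂ R)) {a : R} {μ : ℂ} {m : ℕ}
    (ha : IsNilpotent (a - algebraMap ℂ R μ)) (ham : a ^ m = 1) : μ ^ m = 1 := by
  have h1 : IsNilpotent (algebraMap ℂ R (μ ^ m - 1)) := by
    have := aux_nilp_pow ha m
    rw [ham] at this
    rw [map_sub, map_one]
    simpa using this.neg
  obtain ⟨k, hk⟩ := h1
  rw [← map_pow] at hk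
  have h2 : (μ ^ m - 1) ^ k = 0 := hinj (by simpa using hk)
  have h3 : μ ^ m - 1 = 0 := ((pow_eq_zero_iff' (M₀ := ℂ)).mp h2).1
  exact sub_eq_zero.mp h3

open Finset in
lemma aux_key_comm {R : Type*} [CommRing R] [Algebra ℂ R]
    (hinj : Function.Injective (algebraMap ℂ R)) {a b : R} {μ : ℂ} {m : ℕ} (hm : 0 < m)
    (ha : IsNilpotent (a - algebraMap ℂ R μ)) (hb : IsNilpotent (b - algebraMap ℂ R μ))
    (ham : a ^ m = 1) (hbm : b ^ m = 1) : a = b := by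
  have hnt : (1 : R) ≠ 0 := by
    intro h
    have : (1 : ℂ) = 0 := hinj (by simpa using h)
    simp at this
  have hμ : μ ≠ 0 := by
    rintro rfl
    have hna : IsNilpotent a := by simpa using ha
    obtain ⟨k, hk⟩ := hna
    apply hnt
    calc (1 : R) = (a ^ m) ^ k := by rw [ham, one_pow]
      _ = (a ^ k) ^ m := by rw [← pow_mul, ← pow_mul, mul_comm]
      _ = 0 := by rw [hk, zero_pow hm.ne']
  set c : ℂ := (m : ℂ) * μ ^ (m - 1) with hc
  have hc0 : c ≠ 0 := by
    apply mul_ne_zero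
    · exact Nat.cast_ne_zero.mpr hm.ne'
    · exact pow_ne_zero _ hμ
  set D : R := ∑ i ∈ range m, a ^ i * b ^ (m - 1 - i) with hD
  have hD0 : D * (a - b) = 0 := by
    rw [geom_sum₂_mul, ham, hbm, sub_self]
  have hnilD : IsNilpotent (D - algebraMap ℂ R c) := by
    have hrw : D - algebraMap ℂ R c
        = ∑ i ∈ range m, (a ^ i * b ^ (m - 1 - i) - algebraMap ℂ R (μ ^ (m - 1))) := by
      rw [Finset.sum_sub_distrib, Finset.sum_const, card_range, hc, map_mul, map_natCast,
        nsmul_eq_mul]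
    rw [hrw]
    apply isNilpotent_sum
    intro i hi
    have hij : i + (m - 1 - i) = m - 1 := by
      have := Finset.mem_range.mp hi; omega
    have hsplit : a ^ i * b ^ (m - 1 - i) - algebraMap ℂ R (μ ^ (m - 1))
        = a ^ i * (b ^ (m - 1 - i) - algebraMap ℂ R (μ ^ (m - 1 - i)))
          + (a ^ i - algebraMap ℂ R (μ ^ i)) * algebraMap ℂ R (μ ^ (m - 1 - i)) := by
      have hμsplit : μ ^ (m - 1) = μ ^ i * μ ^ (m - 1 - i) := by rw [← pow_add, hij]
      rw [hμsplit, map_mul]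
      ring
    rw [hsplit]
    exact (Commute.all _ _).isNilpotent_add
      ((Commute.all _ _).isNilpotent_mul_left (aux_nilp_pow hb _))
      ((Commute.all _ _).isNilpotent_mul_right (aux_nilp_pow ha _))
  have hu : IsUnit D := by
    have hcu : IsUnit (algebraMap ℂ R c) := (isUnit_iff_ne_zero.mpr hc0).map _
    have := hnilD.isUnit_add_right_of_commute hcu (Commute.all _ _)
    rwa [sub_add_cancel] at this
  have h4 : D * (a - b) = D * 0 := by rw [mul_zero, hD0]
  exact sub_eq_zero.mp (hu.mul_left_cancel h4)

set_option maxHeartbeats 1000000 in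
lemma aux_end_key {W : Type*} [AddCommGroup W] [Module ℂ W] [Nontrivial W]
    {a b : Module.End ℂ W} {μ : ℂ} {m : ℕ} (hm : 0 < m) (hab : Commute a b)
    (ha : IsNilpotent (a - algebraMap ℂ (Module.End ℂ W) μ))
    (hb : IsNilpotent (b - algebraMap ℂ (Module.End ℂ W) μ))
    (ham : a ^ m = 1) (hbm : b ^ m = 1) : a = b ∧ μ ^ m = 1 := by
  have hEinj : Function.Injective (algebraMap ℂ (Module.End ℂ W)) := by
    intro x y h
    obtain ⟨w, hw⟩ := exists_ne (0 : W)
    have := congrArg (fun f : Module.End ℂ W => f w) h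
    simp only [Module.algebraMap_end_apply] at this
    have h2 : (x - y) • w = 0 := by rw [sub_smul, this, sub_self]
    rcases smul_eq_zero.mp h2 with h3 | h3
    · exact sub_eq_zero.mp h3
    · exact absurd h3 hw
  have hcomm : ∀ x ∈ ({a, b} : Set (Module.End ℂ W)), ∀ y ∈ ({a, b} : Set (Module.End ℂ W)),
      x * y = y * x := by
    rintro x (rfl | rfl) y (rfl | rfl)
    · rfl
    · exact hab
    · exact hab.symm
    · rfl
  set A' := Algebra.adjoin ℂ ({a, b} : Set (Module.End ℂ W)) with hA'
  have hva : a ∈ A' := Algebra.subset_adjoin (by simp)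
  have hvb : b ∈ A' := Algebra.subset_adjoin (by simp)
  set a' : A' := ⟨a, hva⟩
  set b' : A' := ⟨b, hvb⟩
  have hval : Function.Injective (A'.val) := Subtype.coe_injective
  have halg : ∀ c : ℂ, (A'.val) (algebraMap ℂ A' c) = algebraMap ℂ (Module.End ℂ W) c := by
    intro c; simp
  have hinj' : Function.Injective (algebraMap ℂ A') := by
    intro x y h
    apply hEinj
    rw [← halg, ← halg, h]
  have ha' : IsNilpotent (a' - algebraMap ℂ A' μ) := by
    obtain ⟨k, hk⟩ := ha
    refine ⟨k, hval ?_⟩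
    rw [map_pow, map_zero, map_sub, halg]
    exact hk
  have hb' : IsNilpotent (b' - algebraMap ℂ A' μ) := by
    obtain ⟨k, hk⟩ := hb
    refine ⟨k, hval ?_⟩
    rw [map_pow, map_zero, map_sub, halg]
    exact hk
  have ham' : a' ^ m = 1 := hval (by rw [map_pow, map_one]; exact ham)
  have hbm' : b' ^ m = 1 := hval (by rw [map_pow, map_one]; exact hbm)
  constructor
  · exact congrArg A'.val
      (@aux_key_comm ↥A' (Algebra.adjoinCommRingOfComm ℂ hcomm) A'.algebra
        hinj' _ _ _ _ hm ha' hb' ham' hbm')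
  · exact @aux_key_root ↥A' (Algebra.adjoinCommRingOfComm ℂ hcomm) A'.algebra
      hinj' _ _ _ ha' ham'

open Module.End Set in
lemma aux_core {G : Type*} [CommGroup G] [Fintype G] {p : ℕ} (hp : 1 < p)
    (hG : ∀ g : G, g ^ p = 1) {n : ℕ} (ρ : G →* Matrix.GeneralLinearGroup (Fin n) ℂ)
    (hρ : Function.Injective ρ) : Fintype.card G ≤ p ^ n := by
  classical
  set f : G → Module.End ℂ (Fin n → ℂ) := fun g => Matrix.toLinAlgEquiv' ((ρ g : Matrix (Fin n) (Fin n) ℂ)) with hf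
  have hfmul : ∀ g h : G, f (g * h) = f g * f h := by
    intro g h
    simp only [hf, map_mul, Units.val_mul]
  have hcomm : ∀ g h : G, Commute (f g) (f h) := by
    intro g h
    have : f (g * h) = f (h * g) := by rw [mul_comm]
    rw [hfmul, hfmul] at this
    exact this
  have hfp : ∀ g : G, f g ^ p = 1 := by
    intro g
    have : ((ρ g : Matrix (Fin n) (Fin n) ℂ)) ^ p = 1 := by
      rw [← Units.val_pow_eq_pow_val, ← map_pow, hG, map_one, Units.val_one]
    simp only [hf, ← map_pow, this, map_one]
  have hfinj : Function.Injective f := by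
    intro g h hgh
    apply hρ
    apply Units.ext
    exact Matrix.toLinAlgEquiv'.injective hgh
  set W : (G → ℂ) → Submodule ℂ (Fin n → ℂ) := fun χ => ⨅ g, (f g).maxGenEigenspace (χ g) with hW
  have hspan : ⨆ χ : G → ℂ, W χ = ⊤ := by
    apply iSup_iInf_maxGenEigenspace_eq_top_of_iSup_maxGenEigenspace_eq_top_of_commute
    · intro g h _
      exact hcomm g h
    · intro g
      exact iSup_maxGenEigenspace_eq_top (f g)
  have hind : iSupIndep W :=
    independent_iInf_maxGenEigenspace_of_forall_mapsTo f
      (fun i j φ => mapsTo_maxGenEigenspace_of_comm (hcomm j i) φ)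
  letI : Fintype {χ : G → ℂ // W χ ≠ ⊥} := hind.fintypeNeBotOfFiniteDimensional
  set T := {χ : G → ℂ // W χ ≠ ⊥} with hT
  have hcardT : Fintype.card T ≤ n := by
    have h1 := hind.subtype_ne_bot_le_finrank
    have h2 : Module.finrank ℂ (Fin n → ℂ) = n := by simp
    rw [h2] at h1
    exact h1
  have hWmapsTo : ∀ (χ : G → ℂ) (g : G), MapsTo (f g) (W χ) (W χ) := by
    intro χ g x hx
    rw [SetLike.mem_coe] at hx
    rw [SetLike.mem_coe]
    rw [hW, Submodule.mem_iInf] at hx ⊢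
    intro h
    exact SetLike.mem_coe.mp
      (mapsTo_maxGenEigenspace_of_comm (hcomm h g) (χ h) (SetLike.mem_coe.mpr (hx h)))
  -- restricted endomorphisms
  have hrest : ∀ (χ : T) (g : G),
      IsNilpotent ((f g).restrict (hWmapsTo χ.1 g) - algebraMap ℂ (Module.End ℂ (W χ.1)) (χ.1 g))
      ∧ ((f g).restrict (hWmapsTo χ.1 g)) ^ p = 1 := by
    intro χ g
    constructor
    · have hle : W χ.1 ≤ (f g).maxGenEigenspace (χ.1 g) := iInf_le _ g
      have hmt : MapsTo (f g - algebraMap ℂ (Module.End ℂ (Fin n → ℂ)) (χ.1 g)) (W χ.1) (W χ.1) := by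
        intro x hx
        have h1 : (f g - algebraMap ℂ (Module.End ℂ (Fin n → ℂ)) (χ.1 g)) x = f g x - (χ.1 g) • x := by
          simp [Module.algebraMap_end_apply]
        rw [SetLike.mem_coe] at hx
        rw [SetLike.mem_coe, h1]
        exact Submodule.sub_mem _ (hWmapsTo χ.1 g hx) (Submodule.smul_mem _ _ hx)
      have heq : (f g).restrict (hWmapsTo χ.1 g) - algebraMap ℂ (Module.End ℂ (W χ.1)) (χ.1 g)
          = (f g - algebraMap ℂ (Module.End ℂ (Fin n → ℂ)) (χ.1 g)).restrict hmt := by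
        ext x
        simp [LinearMap.restrict_apply, LinearMap.coe_restrict_apply, Module.algebraMap_end_apply]
        rfl
      rw [heq]
      exact isNilpotent_restrict_of_le hle
        (isNilpotent_restrict_maxGenEigenspace_sub_algebraMap (f g) (χ.1 g))
    · have h1 : ((f g).restrict (hWmapsTo χ.1 g)) ^ p = ((f g) ^ p).restrict _ :=
        Module.End.pow_restrict p _
      rw [h1]
      ext x
      simp [LinearMap.restrict_apply, hfp g]
  have hroot : ∀ (χ : T) (g : G), (χ.1 g) ^ p = 1 := by
    intro χ g
    haveI : Nontrivial (W χ.1) := Submodule.nontrivial_iff_ne_bot.mpr χ.2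
    exact (aux_end_key (Nat.lt_of_lt_of_le Nat.zero_lt_one hp.le) (Commute.refl _)
      (hrest χ g).1 (hrest χ g).1 (hrest χ g).2 (hrest χ g).2).2
  have hΦinj : Function.Injective (fun (g : G) (χ : T) => χ.1 g) := by
    intro g h hgh
    apply hfinj
    have hloc : ∀ χ : G → ℂ, W χ ≤ LinearMap.eqLocus (f g) (f h) := by
      intro χ
      by_cases hχ : W χ = ⊥
      · rw [hχ]; exact bot_le
      · haveI : Nontrivial (W χ) := Submodule.nontrivial_iff_ne_bot.mpr hχ
        have hμ : χ g = χ h := congrFun hgh ⟨χ, hχ⟩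
        have hab := aux_end_key (a := (f g).restrict (hWmapsTo χ g))
          (b := (f h).restrict (hWmapsTo χ h)) (μ := χ g)
          (Nat.lt_of_lt_of_le Nat.zero_lt_one hp.le)
          (LinearMap.restrict_commute (hcomm g h) _ _)
          (hrest ⟨χ, hχ⟩ g).1 (by rw [hμ]; exact (hrest ⟨χ, hχ⟩ h).1)
          (hrest ⟨χ, hχ⟩ g).2 (hrest ⟨χ, hχ⟩ h).2
        intro x hx
        have := congrArg (fun F => ((F ⟨x, hx⟩ : W χ) : Fin n → ℂ)) hab.1
        exact this
    have htop : LinearMap.eqLocus (f g) (f h) = ⊤ := by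
      rw [eq_top_iff, ← hspan]
      exact iSup_le hloc
    apply LinearMap.ext
    intro x
    have : x ∈ LinearMap.eqLocus (f g) (f h) := htop ▸ Submodule.mem_top
    exact this
  -- counting
  set Z := Polynomial.nthRootsFinset p (1 : ℂ) with hZ
  have hZcard : Z.card = p :=
    (Complex.isPrimitiveRoot_exp p (by omega)).card_nthRootsFinset
  have hinj2 : Function.Injective (fun (g : G) (χ : T) =>
      (⟨χ.1 g, (Polynomial.mem_nthRootsFinset (by omega) 1).mpr (hroot χ g)⟩ : Z)) := by
    intro g h hgh
    apply hΦinj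
    funext χ
    exact congrArg Subtype.val (congrFun hgh χ)
  calc Fintype.card G ≤ Fintype.card (T → Z) := Fintype.card_le_of_injective _ hinj2
    _ = Z.card ^ Fintype.card T := by rw [Fintype.card_fun, Fintype.card_coe]
    _ = p ^ Fintype.card T := by rw [hZcard]
    _ ≤ p ^ n := Nat.pow_le_pow_right (by omega) hcardT

-- injective hom ZMod p →+ ZMod m when p ∣ m
lemma aux_zmod_embed {p m : ℕ} (hp : 0 < p) (hm : 0 < m) (hdvd : p ∣ m) :
    ∃ φ : ZMod p →+ ZMod m, Function.Injective φ := by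
  haveI : NeZero p := ⟨hp.ne'⟩
  haveI : NeZero m := ⟨hm.ne'⟩
  set g : ZMod m := ((m / p : ℕ) : ZMod m) with hg
  have horder : addOrderOf g = p := by
    rw [hg, ZMod.addOrderOf_coe _ hm.ne']
    have h1 : m.gcd (m / p) = m / p := Nat.gcd_eq_right (Nat.div_dvd_of_dvd hdvd)
    rw [h1, Nat.div_div_self hdvd hm.ne']
  have hzero : (zmultiplesHom (ZMod m) g) (p : ℤ) = 0 := by
    simp only [zmultiplesHom_apply, natCast_zsmul]
    rw [← horder]
    exact addOrderOf_nsmul_eq_zero g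
  refine ⟨ZMod.lift p ⟨zmultiplesHom (ZMod m) g, hzero⟩, ?_⟩
  rw [injective_iff_map_eq_zero]
  intro x hx
  have hxval : x = ((x.val : ℤ) : ZMod p) := by
    push_cast
    rw [ZMod.natCast_val, ZMod.cast_id]
  rw [hxval, ZMod.lift_coe] at hx
  simp only [zmultiplesHom_apply, natCast_zsmul] at hx
  have : addOrderOf g ∣ x.val := addOrderOf_dvd_of_nsmul_eq_zero hx
  rw [horder] at this
  have hlt : x.val < p := ZMod.val_lt x
  have hval0 : x.val = 0 := Nat.eq_zero_of_dvd_of_lt this hlt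
  rw [hxval, hval0]
  simp

lemma aux_zmod_units {m : ℕ} (hm : 1 < m) :
    ∃ φ : ZMod m →+ Additive ℂˣ, Function.Injective φ := by
  haveI : NeZero m := ⟨by omega⟩
  have hζ : IsPrimitiveRoot (Complex.exp (2 * Real.pi * Complex.I / m)) m :=
    Complex.isPrimitiveRoot_exp m (by omega)
  set ζ := Complex.exp (2 * Real.pi * Complex.I / m) with hζdef
  have hu : IsUnit ζ := hζ.isUnit (by omega)
  set u : ℂˣ := hu.unit with hudef
  have huv : (u : ℂ) = ζ := hu.unit_spec
  have hum : u ^ m = 1 := by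
    apply Units.ext
    push_cast [huv]
    exact hζ.pow_eq_one
  have hzero : (zmultiplesHom (Additive ℂˣ) (Additive.ofMul u)) (m : ℤ) = 0 := by
    simp only [zmultiplesHom_apply, natCast_zsmul]
    rw [← ofMul_pow, hum, ofMul_one]
  refine ⟨ZMod.lift m ⟨zmultiplesHom (Additive ℂˣ) (Additive.ofMul u), hzero⟩, ?_⟩
  rw [injective_iff_map_eq_zero]
  intro x hx
  have hxval : x = ((x.val : ℤ) : ZMod m) := by
    push_cast
    rw [ZMod.natCast_val, ZMod.cast_id]
  rw [hxval, ZMod.lift_coe] at hx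
  simp only [zmultiplesHom_apply, natCast_zsmul] at hx
  have hpow : u ^ x.val = 1 := by
    have h2 : Additive.ofMul (u ^ x.val) = 0 := by
      rw [ofMul_pow, hx]
    exact congrArg Additive.toMul h2
  have hζpow : ζ ^ x.val = 1 := by
    have := congrArg (Units.val) hpow
    push_cast [huv] at this
    exact this
  have hdvd : m ∣ x.val := hζ.dvd_of_pow_eq_one _ hζpow
  have hval0 : x.val = 0 := Nat.eq_zero_of_dvd_of_lt hdvd (ZMod.val_lt x) 
  rw [hxval, hval0]
  simp

noncomputable def auxDiag (s : ℕ) : (Fin s → ℂˣ) →* Matrix.GeneralLinearGroup (Fin s) ℂ where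
  toFun v :=
    { val := Matrix.diagonal fun i => (v i : ℂ)
      inv := Matrix.diagonal fun i => ((v i)⁻¹ : ℂ)
      val_inv := by rw [Matrix.diagonal_mul_diagonal]; simp
      inv_val := by rw [Matrix.diagonal_mul_diagonal]; simp }
  map_one' := by
    apply Units.ext
    simp
  map_mul' x y := by
    apply Units.ext
    simp [Matrix.diagonal_mul_diagonal]

lemma auxDiag_injective (s : ℕ) : Function.Injective (auxDiag s) := by
  intro v w h
  funext i
  apply Units.ext
  have := congrArg (fun u : Matrix.GeneralLinearGroup (Fin s) ℂ => (u : Matrix (Fin s) (Fin s) ℂ) i i) h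
  simpa [auxDiag, Matrix.diagonal_apply_eq] using this

/-- a finite abelian group with invariant factor decomposition
`A ≅ Z_{d_1} ⊕ ... ⊕ Z_{d_s}` (with `d_1 | d_2 | ... | d_s`) admits a faithful
complex representation of dimension `s`, and every faithful complex representation of `A`
has dimension at least `s`; hence the minimal faithful complex dimension of `A` is `s`. -/
theorem stmt11 (A : Type) [AddCommGroup A] [Fintype A] (s : ℕ) (d : Fin s → ℕ)
    (hd : ∀ i, 1 < d i) (hdvd : ∀ i j : Fin s, i ≤ j → d i ∣ d j)
    (hiso : Nonempty (A ≃+ ∀ i : Fin s, ZMod (d i))) :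
    (∃ ρ : Multiplicative A →* Matrix.GeneralLinearGroup (Fin s) ℂ, Function.Injective ρ) ∧
    (∀ n : ℕ, ∀ ρ : Multiplicative A →* Matrix.GeneralLinearGroup (Fin n) ℂ,
      Function.Injective ρ → s ≤ n) := by
  obtain ⟨e⟩ := hiso
  constructor
  · -- existence of a faithful representation of dimension s
    choose χ hχ using fun i => aux_zmod_units (hd i)
    refine ⟨{
      toFun := fun x => auxDiag s fun i => Additive.toMul (χ i (e (Multiplicative.toAdd x) i))
      map_one' := by
        refine Eq.trans (congrArg (auxDiag s) ?_) (map_one (auxDiag s))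
        funext i
        simp
      map_mul' := fun x y => by
        refine Eq.trans (congrArg (auxDiag s) ?_) (map_mul (auxDiag s) _ _)
        funext i
        simp [toMul_add] }, ?_⟩
    intro x y hxy
    simp only [MonoidHom.coe_mk, OneHom.coe_mk] at hxy
    have h1 := auxDiag_injective s hxy
    have h2 : e (Multiplicative.toAdd x) = e (Multiplicative.toAdd y) := by
      funext i
      exact hχ i (Additive.toMul.injective (congrFun h1 i))
    exact Multiplicative.toAdd.injective (e.injective h2)
  · -- lower bound
    intro n ρ hρ
    rcases Nat.eq_zero_or_pos s with rfl | hs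
    · exact Nat.zero_le n
    set i0 : Fin s := ⟨0, hs⟩ with hi0
    set p := (d i0).minFac with hp
    have hpp : p.Prime := Nat.minFac_prime (by have := hd i0; omega)
    have hpd : ∀ i, p ∣ d i := fun i => (Nat.minFac_dvd _).trans (hdvd i0 i (by simp [Fin.le_def, hi0]))
    haveI : NeZero p := ⟨hpp.pos.ne'⟩
    choose φ hφ using fun i => aux_zmod_embed hpp.pos (by have := hd i; omega : 0 < d i) (hpd i)
    set Ψ : (∀ i : Fin s, ZMod p) →+ (∀ i : Fin s, ZMod (d i)) :=
      { toFun := fun x i => φ i (x i)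
        map_zero' := by funext i; simp
        map_add' := fun x y => by funext i; simp } with hΨ
    have hΨinj : Function.Injective Ψ := by
      intro x y h
      funext i
      exact hφ i (congrFun h i)
    set g : (∀ i : Fin s, ZMod p) →+ A := (e.symm.toAddMonoidHom.comp Ψ) with hg
    have hginj : Function.Injective g := e.symm.injective.comp hΨinj
    set ρ' : Multiplicative (∀ i : Fin s, ZMod p) →* Matrix.GeneralLinearGroup (Fin n) ℂ :=
      ρ.comp (AddMonoidHom.toMultiplicative g) with hρ'
    have hρ'inj : Function.Injective ρ' := by
      apply hρ.comp
      intro x y h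
      simp only [AddMonoidHom.toMultiplicative_apply_apply] at h
      exact Multiplicative.ofAdd.injective (congrArg Multiplicative.ofAdd
        (hginj (Multiplicative.ofAdd.injective h)))
    have hG : ∀ x : Multiplicative (∀ i : Fin s, ZMod p), x ^ p = 1 := by
      intro x
      have : p • (Multiplicative.toAdd x) = 0 := by
        funext i
        show p • (Multiplicative.toAdd x i) = 0
        rw [nsmul_eq_mul]
        simp [ZMod.natCast_self]
      calc x ^ p = Multiplicative.ofAdd (p • Multiplicative.toAdd x) := rfl
        _ = 1 := by rw [this]; rfl
    have hcard := aux_core hpp.one_lt hG ρ' hρ'inj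
    have hcardG : Fintype.card (Multiplicative (∀ i : Fin s, ZMod p)) = p ^ s := by
      rw [Fintype.card_multiplicative, Fintype.card_pi]
      simp [ZMod.card]
    rw [hcardG] at hcard
    exact (Nat.pow_le_pow_iff_right hpp.one_lt).mp hcard
end

section
/- Let G = A ⋊ H be a semidirect product of a finite abelian group A by a finite group H such that the action map H → Aut(A) is injective. Suppose (π, V) is a faithful finite-dimensional complex representation of G and V decomposes as a direct sum of p one-dimensional A-invariant subspaces V_1, ..., V_p permuted by the π(h) for h ∈ H. Then the induced homomorphism H → S_p is injective; in particular dim_C V ≥ μ(H), the minimal permutation degree of H. -/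
open SemidirectProduct

section aux

variable {A : Type} [CommGroup A] [Fintype A] {H : Type} [Group H] [Fintype H]
  {φ : H →* MulAut A}
  {V : Type} [AddCommGroup V] [Module ℂ V] [FiniteDimensional ℂ V]

/-- A linear map preserving a 1-dimensional subspace acts on it by a scalar. -/
lemma aux_scalar (T : V →ₗ[ℂ] V) (U : Submodule ℂ V) (hU : Module.finrank ℂ U = 1)
    (hT : ∀ v ∈ U, T v ∈ U) : ∃ c : ℂ, ∀ v ∈ U, T v = c • v := by
  obtain ⟨w, hwU, hw0⟩ := Submodule.exists_mem_ne_zero_of_ne_bot (p := U) (by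
    intro h; rw [h] at hU; simp at hU)
  have hw0' : (⟨w, hwU⟩ : U) ≠ 0 := by
    simp [Subtype.ext_iff, hw0]
  have : FiniteDimensional ℂ U := Module.finite_of_finrank_eq_succ hU
  obtain ⟨c, hc⟩ := exists_smul_eq_of_finrank_eq_one hU hw0'
    (⟨T w, hT w hwU⟩ : U)
  refine ⟨c, fun v hv => ?_⟩
  obtain ⟨t, ht⟩ := exists_smul_eq_of_finrank_eq_one hU hw0' (⟨v, hv⟩ : U)
  have ht' : t • w = v := congrArg Subtype.val ht
  have hc' : c • w = T w := congrArg Subtype.val hc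
  rw [← ht', map_smul, ← hc', smul_comm]

end aux

/-- let `G = A ⋊ H` with `A` finite abelian, `H` finite, and the action map
`H → Aut(A)` injective. If `(π, V)` is a faithful complex representation of `G` and `V`
decomposes as a direct sum of one-dimensional `A`-invariant subspaces `V_1, ..., V_p`
permuted by the `π(h)`, then the induced homomorphism `H → S_p` is injective; in particular
`dim_ℂ V ≥ μ(H)`, the minimal permutation degree of `H`. -/
theorem stmt16 (A : Type) [CommGroup A] [Fintype A] (H : Type) [Group H] [Fintype H]
    (φ : H →* MulAut A) (hφ : Function.Injective φ)
    (V : Type) [AddCommGroup V] [Module ℂ V] [FiniteDimensional ℂ V]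
    (π : (A ⋊[φ] H) →* (V ≃ₗ[ℂ] V)) (hπ : Function.Injective π)
    (p : ℕ) (W : Fin p → Submodule ℂ V)
    (hint : DirectSum.IsInternal W)
    (hdim : ∀ i, Module.finrank ℂ (W i) = 1)
    (hAinv : ∀ a : A, ∀ i, ∀ v ∈ W i, π (SemidirectProduct.inl a) v ∈ W i)
    (hperm : ∀ h : H, ∃ σ : Equiv.Perm (Fin p), ∀ i,
      (W i).map (π (SemidirectProduct.inr h) : V →ₗ[ℂ] V) = W (σ i)) :
    (∃ f : H →* Equiv.Perm (Fin p), Function.Injective f ∧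
      ∀ h i, (W i).map (π (SemidirectProduct.inr h) : V →ₗ[ℂ] V) = W (f h i)) ∧
    sInf {n : ℕ | ∃ f : H →* Equiv.Perm (Fin n), Function.Injective f} ≤
      Module.finrank ℂ V := by
  classical
  -- the `W i` are nonzero and pairwise distinct
  have hne : ∀ i, W i ≠ ⊥ := by
    intro i h
    have := hdim i; rw [h] at this; simp at this
  have hdist : ∀ i j : Fin p, W i = W j → i = j := by
    intro i j hij
    by_contra hij'
    have hd := hint.submodule_iSupIndep i
    have hle : W j ≤ ⨆ (k) (_ : k ≠ i), W k :=
      le_iSup₂ (f := fun k (_ : k ≠ i) => W k) j (Ne.symm hij')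
    have : Disjoint (W i) (W j) := hd.mono_right hle
    rw [hij] at this
    exact hne j (disjoint_self.mp this)
  -- uniqueness of the permutation
  have huniq : ∀ (h : H) (σ τ : Equiv.Perm (Fin p)),
      (∀ i, (W i).map (π (inr h) : V →ₗ[ℂ] V) = W (σ i)) →
      (∀ i, (W i).map (π (inr h) : V →ₗ[ℂ] V) = W (τ i)) → σ = τ := by
    intro h σ τ hσ hτ
    exact Equiv.ext fun i => hdist _ _ ((hσ i).symm.trans (hτ i))
  choose f0 hf0 using hperm
  have hmul : ∀ h₁ h₂ : H, f0 (h₁ * h₂) = f0 h₁ * f0 h₂ := by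
    intro h₁ h₂
    refine huniq (h₁ * h₂) _ _ (hf0 _) ?_
    intro i
    have hcomp : (π (inr (h₁ * h₂)) : V →ₗ[ℂ] V)
        = (π (inr h₁) : V →ₗ[ℂ] V) ∘ₗ (π (inr h₂) : V →ₗ[ℂ] V) := by
      ext v; simp [map_mul]
    rw [hcomp, Submodule.map_comp, hf0 h₂ i, hf0 h₁ (f0 h₂ i)]
    rfl
  set f : H →* Equiv.Perm (Fin p) := MonoidHom.mk' f0 hmul with hf
  have hfinj : Function.Injective f := by
    rw [injective_iff_map_eq_one]
    intro h hh
    have hWfix : ∀ i, (W i).map (π (inr h) : V →ₗ[ℂ] V) = W i := by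
      intro i
      have := hf0 h i
      rw [show f0 h = f h from rfl, hh] at this
      simpa using this
    have key : ∀ a : A, φ h a = a := by
      intro a
      have heqi : ∀ i, ∀ v ∈ W i, π (inl (φ h a)) v = π (inl a) v := by
        intro i v hv
        obtain ⟨c, hc⟩ := aux_scalar (π (inl a) : V →ₗ[ℂ] V) (W i) (hdim i) (hAinv a i)
        have hv' : v ∈ (W i).map (π (inr h) : V →ₗ[ℂ] V) := (hWfix i).symm ▸ hv
        obtain ⟨u, huW, huv⟩ := hv'
        have hrw : (inl (φ h a) : A ⋊[φ] H) = inr h * inl a * inr h⁻¹ :=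
          SemidirectProduct.inl_aut h a
        have h1 : π (inr h⁻¹) v = u := by
          rw [← huv]
          show (π (inr h⁻¹) * π (inr h)) u = u
          rw [← map_mul, ← map_mul, inv_mul_cancel, map_one, map_one]
          rfl
        calc π (inl (φ h a)) v = π (inr h) (π (inl a) (π (inr h⁻¹) v)) := by
              rw [hrw, map_mul, map_mul]; rfl
          _ = π (inr h) (c • u) := by rw [h1]; exact congrArg _ (hc u huW)
          _ = c • v := by rw [← huv]; exact (π (inr h)).map_smul c u
          _ = π (inl a) v := (hc v hv).symm
      have hall : ∀ v : V, π (inl (φ h a)) v = π (inl a) v := by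
        intro v
        have hv : v ∈ ⨆ i, W i := by rw [hint.submodule_iSup_eq_top]; trivial
        refine Submodule.iSup_induction W
          (motive := fun v => π (inl (φ h a)) v = π (inl a) v) hv
          (fun i x hx => heqi i x hx) (by simp) ?_
        intro x y hx hy
        simp [map_add, hx, hy]
      have : (inl (φ h a) : A ⋊[φ] H) = inl a := hπ (LinearEquiv.ext hall)
      exact SemidirectProduct.inl_injective this
    have : φ h = φ 1 := by
      rw [map_one]
      exact MulEquiv.ext key
    exact hφ this
  refine ⟨⟨f, hfinj, fun h i => hf0 h i⟩, ?_⟩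
  have heq : Module.finrank ℂ V = p := by
    have e := LinearEquiv.ofBijective (DirectSum.coeLinearMap W) hint
    rw [← e.finrank_eq, Module.finrank_directSum]
    simp [hdim]
  rw [heq]
  exact Nat.sInf_le ⟨f, hfinj⟩
end

section
/- Let m be a natural number with m ≠ 2 and m ≠ 4. Then the symmetric group S_m has no nontrivial normal subgroup whose order is a power of 2. -/
open Equiv Equiv.Perm

/-- In a 2-group (as a subgroup), no element has order 3. -/
lemma no_order_three {G : Type*} [Group G] {N : Subgroup G} (h2 : IsPGroup 2 N)
    {σ : G} (hσ : σ ∈ N) (h3 : orderOf σ = 3) : False := by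
  obtain ⟨k, hk⟩ := h2 ⟨σ, hσ⟩
  have hdvd : orderOf (⟨σ, hσ⟩ : N) ∣ 2 ^ k := orderOf_dvd_of_pow_eq_one hk
  rw [Subgroup.orderOf_mk, h3] at hdvd
  have := Nat.Prime.dvd_of_dvd_pow (p := 3) (by norm_num) hdvd
  norm_num at this

/-- for `m ≠ 2` and `m ≠ 4`, the symmetric group `S_m` has no nontrivial
normal subgroup of 2-power order. -/
theorem stmt17 (m : ℕ) (hm2 : m ≠ 2) (hm4 : m ≠ 4)
    (N : Subgroup (Equiv.Perm (Fin m))) (hN : N.Normal) (h2 : IsPGroup 2 N) :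
    N = ⊥ := by
  rcases le_or_gt m 1 with hm1 | hm1
  · -- trivial group
    have : Subsingleton (Fin m) := Fin.subsingleton_iff_le_one.mpr hm1
    rw [Subgroup.eq_bot_iff_forall]
    intro x _
    exact Equiv.ext fun a => Subsingleton.elim _ _
  have hm3 : 3 ≤ m := by omega
  rw [Subgroup.eq_bot_iff_forall]
  intro x hx
  by_contra hx1
  -- find a moved point
  obtain ⟨a, ha⟩ : ∃ a, x a ≠ a := by
    by_contra h
    push_neg at h
    exact hx1 (Equiv.ext h)
  set c : Fin m := x⁻¹ a with hc
  have hca : c ≠ a := by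
    intro h
    apply ha
    conv_lhs => rw [← h]
    simp [hc]
  -- find b ∉ {a, c}
  obtain ⟨b, hb⟩ : ∃ b, b ∉ ({a, c} : Finset (Fin m)) := by
    by_contra h
    push_neg at h
    have := Finset.card_le_univ ({a, c} : Finset (Fin m))
    have h1 : (Finset.univ : Finset (Fin m)) ⊆ {a, c} := fun z _ => h z
    have h2 := Finset.card_le_card h1
    have h3 : ({a, c} : Finset (Fin m)).card ≤ 2 := Finset.card_insert_le _ _ |>.trans (by simp)
    simp [Fintype.card_fin] at h2
    omega
  simp only [Finset.mem_insert, Finset.mem_singleton, not_or] at hb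
  obtain ⟨hba, hbc⟩ := hb
  set d : Fin m := x⁻¹ b with hd
  have hdc : d ≠ c := fun h => hba (x⁻¹.injective (by rw [← hd, ← hc, h]) )
  -- σ = swap c d * swap a b ∈ N
  set σ : Perm (Fin m) := x⁻¹ * (swap a b * x * swap a b) with hσdef
  have hσN : σ ∈ N := by
    apply N.mul_mem (N.inv_mem hx)
    have := hN.conj_mem x hx (swap a b)
    rwa [swap_inv] at this
  have hσeq : σ = swap c d * swap a b := by
    rw [hσdef, hc, hd, swap_apply_apply, inv_inv]
    group
  -- case analysis on d
  by_cases hda : d = a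
  · -- σ = swap c a * swap a b is a three-cycle
    have h3 : IsThreeCycle σ := by
      rw [hσeq, hda, swap_comm c a]
      exact isThreeCycle_swap_mul_swap_same (Ne.symm hca) (Ne.symm hba) (Ne.symm hbc)
    exact no_order_three h2 hσN h3.orderOf
  by_cases hdb : d = b
  · -- σ⁻¹ = swap a b * swap c b = swap b a * swap b c is a three-cycle
    have h3 : IsThreeCycle σ⁻¹ := by
      rw [hσeq, hdb, mul_inv_rev, swap_inv, swap_inv, swap_comm a b, swap_comm c b]
      exact isThreeCycle_swap_mul_swap_same hba hbc (Ne.symm hca)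
    have := h3.orderOf
    rw [orderOf_inv] at this
    exact no_order_three h2 hσN this
  -- now a, b, c, d are pairwise distinct; σ = (c d)(a b) disjoint product
  have hcb : c ≠ b := Ne.symm hbc
  have hab : a ≠ b := Ne.symm hba
  -- m ≥ 5
  have hcard4 : ({a, b, c, d} : Finset (Fin m)).card = 4 := by
    rw [Finset.card_insert_of_notMem (by simp [hab, Ne.symm hca, Ne.symm hda]),
        Finset.card_insert_of_notMem (by simp [hbc, Ne.symm hdb]),
        Finset.card_insert_of_notMem (by simp [Ne.symm hdc]), Finset.card_singleton]
  have hm5 : 5 ≤ m := by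
    have := Finset.card_le_univ ({a, b, c, d} : Finset (Fin m))
    rw [hcard4, Fintype.card_fin] at this
    omega
  -- find e outside {a, b, c, d}
  obtain ⟨e, he⟩ : ∃ e, e ∉ ({a, b, c, d} : Finset (Fin m)) := by
    by_contra h
    push_neg at h
    have h1 : (Finset.univ : Finset (Fin m)) ⊆ {a, b, c, d} := fun z _ => h z
    have h2 := Finset.card_le_card h1
    rw [hcard4, Finset.card_univ, Fintype.card_fin] at h2
    omega
  simp only [Finset.mem_insert, Finset.mem_singleton, not_or] at he
  obtain ⟨hea, heb, hec, hed⟩ := he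
  -- σ' = swap c e * σ * swap c e ∈ N
  set σ' : Perm (Fin m) := swap c e * σ * swap c e with hσ'def
  have hσ'N : σ' ∈ N := by
    have := hN.conj_mem σ hσN (swap c e)
    rwa [swap_inv] at this
  have hσ'eq : σ' = swap e d * swap a b := by
    have h1 : swap c e * σ * swap c e = (swap c e * swap c d * (swap c e)⁻¹) *
        (swap c e * swap a b * (swap c e)⁻¹) := by
      rw [hσeq, swap_inv]
      simp only [mul_assoc, swap_mul_self_mul]
    rw [hσ'def, h1, ← swap_apply_apply, ← swap_apply_apply,
        swap_apply_of_ne_of_ne (Ne.symm hca) (Ne.symm hea),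
        swap_apply_of_ne_of_ne hbc (fun h => heb h.symm),
        swap_apply_left, swap_apply_of_ne_of_ne hdc (fun h => hed h.symm)]
  -- σ * σ' = swap c d * swap e d (up to cancelling swap a b), a three-cycle
  have hprod : σ * σ' = swap c d * swap e d := by
    rw [hσeq, hσ'eq]
    have hcommute : swap e d * swap a b = swap a b * swap e d := by
      rw [mul_swap_eq_swap_mul,
          swap_apply_of_ne_of_ne (Ne.symm hea) (Ne.symm hda),
          swap_apply_of_ne_of_ne (Ne.symm heb) (Ne.symm hdb)]
    have hcomm : swap a b * (swap e d * swap a b) = swap e d := by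
      rw [hcommute, ← mul_assoc, swap_mul_self, one_mul]
    rw [mul_assoc, hcomm]
  have h3 : IsThreeCycle (σ * σ') := by
    rw [hprod, swap_comm c d, swap_comm e d]
    exact isThreeCycle_swap_mul_swap_same hdc (fun h => hed h.symm) (Ne.symm hec)
  exact no_order_three h2 (N.mul_mem hσN hσ'N) h3.orderOf
end
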